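/- For every permutation π, rd(π) ≤ rd(peg(π)), where peg(π) is the clean compact peg permutation associated with π. -/

import Mathlib

/-! ## Basic definitions: permutations as lists, reversals, distances -/

/-- Decorations for peg permutations: `+`, `-`, `•`. -/
inductive Deco where
  | plus : Deco
  | minus : Deco
  | dot : Deco
deriving DecidableEq, Repr

/-- A peg permutation: a list of entries together with decorations. -/
abbrev PegPerm := List (ℕ × Deco)

def pegDefault : ℕ × Deco := (0, Deco.dot)

/-- The identity permutation `1 2 ⋯ n` as a list. -/
def idPerm (n : ℕ) : List ℕ := List.range' 1 n

/-- A list of naturals is a permutation (of `1,…,n` where `n` is its length). -/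
def IsPermList (π : List ℕ) : Prop := π.Perm (idPerm π.length)

/-- Reverse the segment of a list from (0-indexed) position `i` to `j` inclusive. -/
def segReverse {α : Type*} (l : List α) (i j : ℕ) : List α :=
  l.take i ++ ((l.drop i).take (j + 1 - i)).reverse ++ l.drop (j + 1)

/-- One reversal step on permutations (reverse a segment of length at least 2). -/
def RevStep (l l' : List ℕ) : Prop :=
  ∃ i j, i < j ∧ j < l.length ∧ l' = segReverse l i j

/-- One prefix reversal step on permutations (reverse a prefix of length at least 2). -/
def PrefRevStep (l l' : List ℕ) : Prop :=
  ∃ j, 0 < j ∧ j < l.length ∧ l' = segReverse l 0 j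

/-- Reachability in exactly `k` steps of the step relation `step`. -/
def ReachIn {α : Type*} (step : α → α → Prop) : ℕ → α → α → Prop
  | 0, x, y => x = y
  | k + 1, x, y => ∃ z, step x z ∧ ReachIn step k z y

/-- The reversal distance of a permutation from the identity. -/
noncomputable def rd (π : List ℕ) : ℕ :=
  sInf {k | ReachIn RevStep k π (idPerm π.length)}

/-- The prefix reversal distance of a permutation from the identity. -/
noncomputable def prd (π : List ℕ) : ℕ :=
  sInf {k | ReachIn PrefRevStep k π (idPerm π.length)}

/-- The ball of radius `k` in the reversal model. -/
def Brd (k : ℕ) : Set (List ℕ) := {π | IsPermList π ∧ rd π ≤ k}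

/-- The ball of radius `k` in the prefix reversal model. -/
def Bprd (k : ℕ) : Set (List ℕ) := {π | IsPermList π ∧ prd π ≤ k}

/-! ## Peg permutations: oriented reversals and distances -/

def flipDeco : Deco → Deco
  | Deco.plus => Deco.minus
  | Deco.minus => Deco.plus
  | Deco.dot => Deco.dot

/-- Oriented reversal of the segment from position `i` to `j` (0-indexed) of a peg
permutation: the segment is reversed and the decorations `+`, `-` are swapped. -/
def pegSegReverse (l : PegPerm) (i j : ℕ) : PegPerm :=
  l.take i ++ (((l.drop i).take (j + 1 - i)).map (fun p => (p.1, flipDeco p.2))).reverse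
    ++ l.drop (j + 1)

/-- One oriented reversal step on peg permutations. -/
def PegRevStep (l l' : PegPerm) : Prop :=
  ∃ i j, i ≤ j ∧ j < l.length ∧ l' = pegSegReverse l i j

/-- One oriented prefix reversal step on peg permutations. -/
def PegPrefRevStep (l l' : PegPerm) : Prop :=
  ∃ j, j < l.length ∧ l' = pegSegReverse l 0 j

/-- The underlying list of a peg permutation is a permutation. -/
def IsPegPermList (l : PegPerm) : Prop := IsPermList (l.map Prod.fst)

/-- An identity peg permutation: underlying identity, every decoration `+` or `•`. -/
def IsIdPeg (l : PegPerm) : Prop :=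
  l.map Prod.fst = idPerm l.length ∧ ∀ p ∈ l, p.2 ≠ Deco.minus

/-- The reversal distance of a peg permutation from an identity peg permutation. -/
noncomputable def pegRd (l : PegPerm) : ℕ :=
  sInf {k | ∃ m, IsIdPeg m ∧ ReachIn PegRevStep k l m}

/-- The prefix reversal distance of a peg permutation from an identity peg permutation. -/
noncomputable def pegPrd (l : PegPerm) : ℕ :=
  sInf {k | ∃ m, IsIdPeg m ∧ ReachIn PegPrefRevStep k l m}

/-- The ball of radius `k` of peg permutations in the reversal model. -/
def PegBrd (k : ℕ) : Set PegPerm := {l | IsPegPermList l ∧ pegRd l ≤ k}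

/-- The ball of radius `k` of peg permutations in the prefix reversal model. -/
def PegBprd (k : ℕ) : Set PegPerm := {l | IsPegPermList l ∧ pegPrd l ≤ k}

/-! ## Patterns -/

/-- Two lists of the same length are order-isomorphic. -/
def OrderIsoList (s t : List ℕ) : Prop :=
  s.length = t.length ∧
  ∀ i j, i < s.length → j < s.length → (s.getD i 0 < s.getD j 0 ↔ t.getD i 0 < t.getD j 0)

/-- `σ` is a (classical) pattern of `τ`. -/
def IsPattern (σ τ : List ℕ) : Prop :=
  ∃ s, s.Sublist τ ∧ OrderIsoList s σ

/-- `σ` is a peg pattern of `τ`: some subsequence of `τ` is order-isomorphic to `σ`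
and whenever an entry of the subsequence is decorated `+` (resp. `-`), the
corresponding entry of `σ` is decorated `+` (resp. `-`). -/
def IsPegPattern (σ τ : PegPerm) : Prop :=
  ∃ s : PegPerm, s.Sublist τ ∧ OrderIsoList (s.map Prod.fst) (σ.map Prod.fst) ∧
    ∀ i, i < s.length →
      ((s.getD i pegDefault).2 = Deco.plus → (σ.getD i pegDefault).2 = Deco.plus) ∧
      ((s.getD i pegDefault).2 = Deco.minus → (σ.getD i pegDefault).2 = Deco.minus)

/-! ## Strips, clean compact and compact peg permutations -/

/-- Two adjacent entries of a peg permutation lie in a common strip. -/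
def StripPair (p q : ℕ × Deco) : Prop :=
  (q.1 = p.1 + 1 ∧ p.2 ≠ Deco.minus ∧ q.2 ≠ Deco.minus) ∨
  (p.1 = q.1 + 1 ∧ p.2 ≠ Deco.plus ∧ q.2 ≠ Deco.plus)

/-- A peg permutation is clean compact when all its strips have length 1, i.e. no two
adjacent entries lie in a common strip. -/
def CleanCompact (l : PegPerm) : Prop :=
  ∀ i, i + 1 < l.length → ¬ StripPair (l.getD i pegDefault) (l.getD (i + 1) pegDefault)

/-- A peg permutation is compact when every strip has length 1 or consists
exclusively of entries decorated `•`. -/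
def CompactPeg (l : PegPerm) : Prop :=
  ∀ i, i + 1 < l.length → StripPair (l.getD i pegDefault) (l.getD (i + 1) pegDefault) →
    (l.getD i pegDefault).2 = Deco.dot ∧ (l.getD (i + 1) pegDefault).2 = Deco.dot

/-! ## The clean compact peg permutation `peg(γ)` associated with a permutation -/

/-- The decomposition of a permutation into maximal monotone strips of adjacent values. -/
def stripGroups (γ : List ℕ) : List (List ℕ) :=
  γ.splitBy (fun a b => b == a + 1 || a == b + 1)

def stripMin (s : List ℕ) : ℕ := s.foldr min (s.headD 0)

def stripDeco (s : List ℕ) : Deco :=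
  if s.length ≤ 1 then Deco.dot
  else if s.headD 0 < s.getLastD 0 then Deco.plus
  else Deco.minus

/-- Rank of `v` among `vals` (used for rescaling). -/
def rankIn (vals : List ℕ) (v : ℕ) : ℕ := (vals.filter (fun w => w ≤ v)).length

/-- The clean compact peg permutation associated with a permutation: replace each
strip by its minimum, decorated `+`/`-`/`•` according to the kind of strip, and rescale. -/
def pegOf (γ : List ℕ) : PegPerm :=
  (stripGroups γ).map (fun s => (rankIn ((stripGroups γ).map stripMin) (stripMin s), stripDeco s))

/-! ## Monotone inflations and grid classes -/

/-- A legal inflation vector for a peg permutation. -/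
def LegalVec (πε : PegPerm) (v : List ℕ) : Prop :=
  v.length = πε.length ∧
  ∀ i, i < πε.length → (πε.getD i pegDefault).2 = Deco.dot → v.getD i 0 ≤ 1

/-- The values of the `i`-th block of the monotone inflation of `πε` through `v`:
an increasing (resp. decreasing) run of `vᵢ` values, occupying the interval of values
determined by the relative order of the entries of `πε`. -/
def blockVals (πε : PegPerm) (v : List ℕ) (i : ℕ) : List ℕ :=
  let off := (((List.range πε.length).filter
      (fun j => (πε.getD j pegDefault).1 < (πε.getD i pegDefault).1)).map
      (fun j => v.getD j 0)).sum
  if (πε.getD i pegDefault).2 = Deco.minus then (List.range' (off + 1) (v.getD i 0)).reverse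
  else List.range' (off + 1) (v.getD i 0)

/-- The monotone inflation `πε[v]`. -/
def inflate (πε : PegPerm) (v : List ℕ) : List ℕ :=
  ((List.range πε.length).map (blockVals πε v)).flatten

/-- The grid class of a peg permutation: all its monotone inflations through legal
inflation vectors. -/
def GridOf (πε : PegPerm) : Set (List ℕ) :=
  {γ | ∃ v, LegalVec πε v ∧ γ = inflate πε v}

/-- Compatibility of decorations in peg monotone inflations: a `+` entry is inflated by
an identity peg permutation (decorations `+`/`•`), a `-` entry by a reverse identity peg
permutation (decorations `-`/`•`), a `•` entry stays `•`. -/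
def DecoOK : Deco → Deco → Prop
  | Deco.plus, d => d ≠ Deco.minus
  | Deco.minus, d => d ≠ Deco.plus
  | Deco.dot, d => d = Deco.dot

/-- The peg grid class of a peg permutation: all its peg monotone inflations. -/
def GridPegOf (πε : PegPerm) : Set PegPerm :=
  {γ | ∃ v, LegalVec πε v ∧ ∃ bs : List PegPerm,
    bs.length = πε.length ∧ γ = bs.flatten ∧
    ∀ i, i < πε.length →
      (bs.getD i []).map Prod.fst = blockVals πε v i ∧
      ∀ p ∈ bs.getD i [], DecoOK (πε.getD i pegDefault).2 p.2}

/-! ## The inflation `π^ε_I` and the permutation `π̃^ε_I` -/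

/-- Canonical peg inflation: every inflated entry keeps the decoration of the
original one. -/
def pegInflate (πε : PegPerm) (v : List ℕ) : PegPerm :=
  ((List.range πε.length).map
    (fun i => (blockVals πε v i).map (fun x => (x, (πε.getD i pegDefault).2)))).flatten

/-- The inflation vector associated with the multiset `I = {i, j}` (0-indexed):
entries `i` and `j` are inflated by one more element each. -/
def inflVec (n i j : ℕ) : List ℕ :=
  (List.range n).map (fun l => 1 + (if l = i then 1 else 0) + (if l = j then 1 else 0))

/-- `π^ε_I` where `I = {i, j}` with `i ≤ j` 0-indexed. -/
def pegI (πε : PegPerm) (i j : ℕ) : PegPerm := pegInflate πε (inflVec πε.length i j)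

/-- `π̃^ε_I`: the result of applying to `π^ε_I` the oriented reversal of the segment
of (0-indexed) positions `i+1, …, j+1`. -/
def pegITilde (πε : PegPerm) (i j : ℕ) : PegPerm := pegSegReverse (pegI πε i j) (i + 1) (j + 1)

/-! ## Clean compact peg bases -/

/-- The clean compact peg basis of a set `B` of peg permutations: the clean compact
peg permutations not in `B` all of whose proper clean compact peg patterns are in `B`. -/
def CCPegBasis (B : Set PegPerm) : Set PegPerm :=
  {πε | IsPegPermList πε ∧ CleanCompact πε ∧ πε ∉ B ∧
    ∀ γ, IsPegPermList γ → CleanCompact γ → IsPegPattern γ πε → γ ≠ πε → γ ∈ B}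

/-! ## The exceptional peg permutations for the prefix reversal model -/

/-- `Θ_e(n)` for even `n`:  `n• (n−2)• ⋯ 4• 2• 1⁺ 3• ⋯ (n−3)• (n−1)•`. -/
def ThetaE (n : ℕ) : PegPerm :=
  ((List.range (n / 2)).map (fun i => (n - 2 * i, Deco.dot))) ++ [(1, Deco.plus)] ++
  ((List.range (n / 2 - 1)).map (fun i => (3 + 2 * i, Deco.dot)))

/-- `Θ_o(n)` for odd `n`:  `n• (n−2)• ⋯ 3• 1⁻ 2• 4• ⋯ (n−3)• (n−1)•`. -/
def ThetaO (n : ℕ) : PegPerm :=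
  ((List.range ((n - 1) / 2)).map (fun i => (n - 2 * i, Deco.dot))) ++ [(1, Deco.minus)] ++
  ((List.range ((n - 1) / 2)).map (fun i => (2 + 2 * i, Deco.dot)))

/-- `Λ_e(n)` for even `n` and `t = n/2`:  `(t+1)⁺ t• (t+2)• (t−1)• ⋯ (n−1)• 2• n• 1•`. -/
def LambdaE (n : ℕ) : PegPerm :=
  (List.range (n / 2)).flatMap
    (fun i => [(n / 2 + 1 + i, if i = 0 then Deco.plus else Deco.dot), (n / 2 - i, Deco.dot)])

/-- `Λ_o(n)` for odd `n` and `t = (n+1)/2`:  `t⁻ (t+1)• (t−1)• (t+2)• ⋯ (n−1)• 2• n• 1•`. -/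
def LambdaO (n : ℕ) : PegPerm :=
  ((n + 1) / 2, Deco.minus) ::
    (List.range ((n + 1) / 2 - 1)).flatMap
      (fun i => [((n + 1) / 2 + 1 + i, Deco.dot), ((n + 1) / 2 - 1 - i, Deco.dot)])

/-! ### Auxiliary development -/

namespace RdPeg

open List

def flipP (p : ℕ × Deco) : ℕ × Deco := (p.1, flipDeco p.2)

lemma flipDeco_flipDeco (d : Deco) : flipDeco (flipDeco d) = d := by cases d <;> rfl

/-- Expansion functions compatible with the decorations of `l`. -/
def GoodF (f : ℕ × Deco → List ℕ) (l : PegPerm) : Prop :=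
  ∀ p ∈ l, f (p.1, flipDeco p.2) = (f p).reverse

lemma seg_decomp {α : Type*} (l : List α) (i j : ℕ) (hij : i ≤ j) :
    l = l.take i ++ ((l.drop i).take (j + 1 - i)) ++ l.drop (j + 1) := by
  rw [List.append_assoc]
  conv_lhs => rw [← List.take_append_drop i l]
  congr 1
  conv_lhs => rw [← List.take_append_drop (j + 1 - i) (l.drop i)]
  congr 1
  rw [List.drop_drop]
  congr 1
  omega

lemma pegSegReverse_eq (l : PegPerm) (i j : ℕ) :
    pegSegReverse l i j
      = l.take i ++ (((l.drop i).take (j + 1 - i)).map flipP).reverse ++ l.drop (j + 1) := rfl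

lemma flatMap_flip_reverse (f : ℕ × Deco → List ℕ) (M : PegPerm)
    (hM : ∀ p ∈ M, f (p.1, flipDeco p.2) = (f p).reverse) :
    ((M.map flipP).reverse).flatMap f = (M.flatMap f).reverse := by
  induction M with
  | nil => simp
  | cons p M ih =>
    simp only [List.map_cons, List.reverse_cons, List.flatMap_append, List.flatMap_cons,
      List.flatMap_nil, List.append_nil, List.reverse_append]
    rw [ih (fun q hq => hM q (List.mem_cons_of_mem _ hq))]
    have := hM p (List.mem_cons_self)
    simp [flipP, this]

lemma length_pegSegReverse (l : PegPerm) (i j : ℕ) (hij : i ≤ j) (hj : j < l.length) :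
    (pegSegReverse l i j).length = l.length := by
  rw [pegSegReverse_eq]
  simp only [List.length_append, List.length_reverse, List.length_map, List.length_take,
    List.length_drop]
  omega

lemma step_sim (f : ℕ × Deco → List ℕ) {l l' : PegPerm} (hg : GoodF f l) (h : PegRevStep l l') :
    GoodF f l' ∧ l'.length = l.length ∧
      (l'.flatMap f = l.flatMap f ∨ RevStep (l.flatMap f) (l'.flatMap f)) := by
  obtain ⟨i, j, hij, hj, rfl⟩ := h
  set A := l.take i with hA
  set M := (l.drop i).take (j + 1 - i) with hM
  set C := l.drop (j + 1) with hC
  have hdec : l = A ++ M ++ C := seg_decomp l i j hij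
  have hMl : ∀ p ∈ M, p ∈ l := fun p hp =>
    List.mem_of_mem_drop (List.mem_of_mem_take hp)
  have hAl : ∀ p ∈ A, p ∈ l := fun p hp => List.mem_of_mem_take hp
  have hCl : ∀ p ∈ C, p ∈ l := fun p hp => List.mem_of_mem_drop hp
  have hps : pegSegReverse l i j = A ++ (M.map flipP).reverse ++ C := pegSegReverse_eq l i j
  have hgood : GoodF f (pegSegReverse l i j) := by
    intro p hp
    rw [hps] at hp
    rcases List.mem_append.1 hp with hp | hp
    · rcases List.mem_append.1 hp with hp | hp
      · exact hg p (hAl p hp)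
      · rw [List.mem_reverse, List.mem_map] at hp
        obtain ⟨q, hq, rfl⟩ := hp
        have h1 := hg q (hMl q hq)
        simp only [flipP, flipDeco_flipDeco, h1, List.reverse_reverse]
    · exact hg p (hCl p hp)
  refine ⟨hgood, length_pegSegReverse l i j hij hj, ?_⟩
  have hMrev : ((M.map flipP).reverse).flatMap f = (M.flatMap f).reverse :=
    flatMap_flip_reverse f M (fun p hp => hg p (hMl p hp))
  have hl' : (pegSegReverse l i j).flatMap f
      = A.flatMap f ++ (M.flatMap f).reverse ++ C.flatMap f := by
    rw [hps, List.flatMap_append, List.flatMap_append, hMrev]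
  have hl : l.flatMap f = A.flatMap f ++ M.flatMap f ++ C.flatMap f := by
    conv_lhs => rw [hdec]
    rw [List.flatMap_append, List.flatMap_append]
  by_cases hlen : (M.flatMap f).length ≤ 1
  · left
    have : (M.flatMap f).reverse = M.flatMap f := by
      rcases e : M.flatMap f with _ | ⟨x, t⟩
      · rfl
      · rcases t with _ | ⟨y, t⟩
        · rfl
        · rw [e] at hlen; simp at hlen
    rw [hl', hl, this]
  · right
    push_neg at hlen
    refine ⟨(A.flatMap f).length, (A.flatMap f).length + (M.flatMap f).length - 1, by omega, ?_, ?_⟩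
    · rw [hl]; simp only [List.length_append]; omega
    · rw [hl']
      unfold segReverse
      have e1 : (l.flatMap f).take (A.flatMap f).length = A.flatMap f := by
        rw [hl, List.append_assoc]; exact List.take_left' rfl
      have e2 : (l.flatMap f).drop (A.flatMap f).length = M.flatMap f ++ C.flatMap f := by
        rw [hl, List.append_assoc]; exact List.drop_left' rfl
      have e4 : (A.flatMap f).length + (M.flatMap f).length - 1 + 1
          = ((A.flatMap f) ++ (M.flatMap f)).length := by
        simp only [List.length_append]; omega
      have e3 : (l.flatMap f).drop ((A.flatMap f).length + (M.flatMap f).length - 1 + 1)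
          = C.flatMap f := by
        rw [hl, e4]; exact List.drop_left' rfl
      rw [e1, e2, e3]
      have e5 : (A.flatMap f).length + (M.flatMap f).length - 1 + 1 - (A.flatMap f).length
          = (M.flatMap f).length := by omega
      rw [e5, List.take_left' rfl]

lemma reach_sim (f : ℕ × Deco → List ℕ) :
    ∀ (k : ℕ) (l m : PegPerm), GoodF f l → ReachIn PegRevStep k l m →
      GoodF f m ∧ m.length = l.length ∧
        ∃ k' ≤ k, ReachIn RevStep k' (l.flatMap f) (m.flatMap f) := by
  intro k
  induction k with
  | zero =>
    intro l m hg h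
    have : l = m := h
    subst this
    exact ⟨hg, rfl, 0, le_refl 0, rfl⟩
  | succ k ih =>
    rintro l m hg ⟨z, hz, hr⟩
    obtain ⟨hgz, hlz, -⟩ := step_sim f hg hz
    obtain ⟨hgm, hlm, k', hk', hreach⟩ := ih z m hgz hr
    rcases (step_sim f hg hz).2.2 with he | hstep
    · exact ⟨hgm, hlm.trans hlz, k', le_trans hk' (Nat.le_succ k), by rwa [he] at hreach⟩
    · exact ⟨hgm, hlm.trans hlz, k' + 1, by omega, ⟨z.flatMap f, hstep, hreach⟩⟩

end RdPeg

namespace RdPeg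

open List

lemma run_struct : ∀ (s : List ℕ), s.Chain' (fun x y => y = x + 1 ∨ x = y + 1) → s.Nodup →
    (∃ a, s = List.range' a s.length) ∨ (∃ a, s = (List.range' a s.length).reverse) := by
  intro s
  induction s with
  | nil => intro _ _; exact Or.inl ⟨0, rfl⟩
  | cons x t ih =>
    intro hch hnd
    rcases t with _ | ⟨y, t'⟩
    · exact Or.inl ⟨x, rfl⟩
    · have hch' : List.Chain' (fun x y => y = x + 1 ∨ x = y + 1) (y :: t') :=
        (List.isChain_cons_cons.1 hch).2
      have hrel : y = x + 1 ∨ x = y + 1 := (List.isChain_cons_cons.1 hch).1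
      have hnd' : (y :: t').Nodup := hnd.of_cons
      have hxnot : x ∉ (y :: t') := (List.nodup_cons.1 hnd).1
      rcases ih hch' hnd' with ⟨a, ht⟩ | ⟨a, ht⟩
      · -- y :: t' = range' a (t'.length + 1)
        have hlen : (y :: t').length = t'.length + 1 := rfl
        rw [hlen, List.range'_succ] at ht
        have hy : y = a := (List.cons.injEq _ _ _ _ ▸ ht).1
        have ht' : t' = List.range' (a + 1) t'.length := (List.cons.injEq _ _ _ _ ▸ ht).2
        rcases hrel with hr | hr
        · -- ascending
          left
          refine ⟨x, ?_⟩
          have hxa : a = x + 1 := by omega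
          have ht2 : t' = List.range' (x + 1 + 1) t'.length := by
            rw [← hxa]; exact ht'
          show x :: y :: t' = List.range' x (t'.length + 1 + 1)
          rw [List.range'_succ, List.range'_succ, ← ht2, hr]
        · -- x = y + 1 = a + 1
          rcases t' with _ | ⟨z, t''⟩
          · right
            refine ⟨a, ?_⟩
            show [x, y] = (List.range' a 2).reverse
            have : List.range' a 2 = [a, a + 1] := by
              rw [show (2:ℕ) = 1 + 1 from rfl, List.range'_succ, List.range'_succ]
              rfl
            rw [this]
            have hx2 : x = a + 1 := by omega
            rw [show ([a, a + 1] : List ℕ).reverse = [a + 1, a] from rfl, hx2, hy]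
          · exfalso
            apply hxnot
            have : x ∈ List.range' a ((z :: t'').length + 1) := by
              rw [List.mem_range']
              exact ⟨1, by simp, by omega⟩
            rw [List.range'_succ, ← ht] at this
            exact this
      · -- y :: t' = (range' a n).reverse, n = t'.length + 1
        have hlen : (y :: t').length = t'.length + 1 := rfl
        rw [hlen] at ht
        have hsplit : List.range' a (t'.length + 1)
            = List.range' a t'.length ++ [a + t'.length] := by
          have := List.range'_concat (step := 1) (s := a) (n := t'.length)
          simpa using this
        rw [hsplit, List.reverse_append, List.reverse_singleton, List.singleton_append] at ht
        have hy : y = a + t'.length := (List.cons.injEq _ _ _ _ ▸ ht).1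
        have ht' : t' = (List.range' a t'.length).reverse := (List.cons.injEq _ _ _ _ ▸ ht).2
        rcases hrel with hr | hr
        · -- y = x + 1 : possibly descending-run-of-1 case or contradiction
          rcases t' with _ | ⟨z, t''⟩
          · left
            refine ⟨x, ?_⟩
            show [x, y] = List.range' x 2
            have : List.range' x 2 = [x, x + 1] := by
              rw [show (2:ℕ) = 1 + 1 from rfl, List.range'_succ, List.range'_succ]
              rfl
            rw [this, hr]
          · exfalso
            apply hxnot
            have hx : x = a + ((z :: t'').length - 1) := by
              simp only [List.length_cons] at hy ⊢
              omega
            have hmem : x ∈ List.range' a (z :: t'').length := by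
              rw [List.mem_range']
              refine ⟨(z :: t'').length - 1, by simp, ?_⟩
              simp only [List.length_cons] at hx ⊢
              omega
            rw [List.mem_cons]
            right
            rw [ht', List.mem_reverse]
            exact hmem
        · -- x = y + 1: descending continues
          right
          refine ⟨a, ?_⟩
          show x :: y :: t' = (List.range' a (t'.length + 1 + 1)).reverse
          have hsplit2 : List.range' a (t'.length + 1 + 1)
              = List.range' a (t'.length + 1) ++ [a + (t'.length + 1)] := by
            have := List.range'_concat (step := 1) (s := a) (n := t'.length + 1)
            simpa using this
          rw [hsplit2, List.reverse_append, List.reverse_singleton]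
          have hx : x = a + (t'.length + 1) := by omega
          rw [← hx, List.singleton_append]
          rw [hsplit, List.reverse_append, List.reverse_singleton, List.singleton_append,
            ← hy, ← ht']

lemma foldr_min_spec (t : List ℕ) (d : ℕ) :
    (t.foldr min d = d ∨ t.foldr min d ∈ t) ∧ t.foldr min d ≤ d ∧ ∀ x ∈ t, t.foldr min d ≤ x := by
  induction t with
  | nil => simp
  | cons x t ih =>
    obtain ⟨h1, h2, h3⟩ := ih
    refine ⟨?_, ?_, ?_⟩
    · simp only [List.foldr_cons]
      rcases le_total x (t.foldr min d) with hle | hle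
      · right
        rw [min_eq_left hle]
        exact List.mem_cons_self
      · rcases h1 with h | h
        · left
          rw [min_eq_right hle, h]
        · right
          rw [min_eq_right hle]
          exact List.mem_cons_of_mem _ h
    · simp only [List.foldr_cons]; omega
    · intro z hz
      rcases List.mem_cons.1 hz with rfl | hz
      · simp only [List.foldr_cons]; omega
      · have := h3 z hz
        simp only [List.foldr_cons]; omega

lemma stripMin_spec (s : List ℕ) (hs : s ≠ []) :
    stripMin s ∈ s ∧ ∀ x ∈ s, stripMin s ≤ x := by
  rcases s with _ | ⟨x, t⟩
  · exact absurd rfl hs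
  · unfold stripMin
    obtain ⟨h1, h2, h3⟩ := foldr_min_spec (x :: t) ((x :: t).headD 0)
    refine ⟨?_, h3⟩
    rcases h1 with h | h
    · rw [h]; simp
    · exact h

lemma run_min (s : List ℕ) (hne : s ≠ [])
    (hch : s.Chain' (fun x y => y = x + 1 ∨ x = y + 1)) (hnd : s.Nodup) :
    s = List.range' (stripMin s) s.length ∨ s = (List.range' (stripMin s) s.length).reverse := by
  obtain ⟨hmem, hle⟩ := stripMin_spec s hne
  have hlen1 : 1 ≤ s.length := List.length_pos_iff.2 hne
  rcases run_struct s hch hnd with ⟨a, ha⟩ | ⟨a, ha⟩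
  · left
    have h1 : a ∈ s := by
      rw [ha, List.mem_range']; exact ⟨0, by omega, by omega⟩
    have h2 : a ≤ stripMin s := by
      have hmm : stripMin s ∈ List.range' a s.length := by rw [← ha]; exact hmem
      rw [List.mem_range'] at hmm
      obtain ⟨i, _, hi⟩ := hmm
      omega
    have : stripMin s = a := le_antisymm (hle a h1) h2
    rw [this]; exact ha
  · right
    have h1 : a ∈ s := by
      rw [ha, List.mem_reverse, List.mem_range']; exact ⟨0, by omega, by omega⟩
    have h2 : a ≤ stripMin s := by
      have hmm : stripMin s ∈ (List.range' a s.length).reverse := by rw [← ha]; exact hmem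
      rw [List.mem_reverse, List.mem_range'] at hmm
      obtain ⟨i, _, hi⟩ := hmm
      omega
    have : stripMin s = a := le_antisymm (hle a h1) h2
    rw [this]; exact ha

lemma rankIn_perm (L L' : List ℕ) (hp : L.Perm L') (v : ℕ) : rankIn L v = rankIn L' v :=
  (hp.filter _).length_eq

lemma rankIn_sorted : ∀ (L : List ℕ), L.Pairwise (· < ·) →
    ∀ i (hi : i < L.length), rankIn L (L[i]) = i + 1 := by
  intro L
  induction L with
  | nil => intro _ i hi; simp at hi
  | cons x t ih =>
    intro hL i hi
    have hall : ∀ y ∈ t, x < y := fun y hy => (List.pairwise_cons.1 hL).1 y hy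
    rcases i with _ | i
    · show rankIn (x :: t) x = 1
      unfold rankIn
      rw [List.filter_cons]
      simp only [decide_eq_true_eq, le_refl, if_true]
      have : t.filter (fun w => w ≤ x) = [] := by
        rw [List.filter_eq_nil_iff]
        intro y hy
        simp only [decide_eq_true_eq]
        exact Nat.not_le.2 (hall y hy)
      rw [this]
      rfl
    · have hi' : i < t.length := by simpa using hi
      have hv : (x :: t)[i + 1] = t[i] := rfl
      rw [hv]
      unfold rankIn
      rw [List.filter_cons]
      have hxle : x ≤ t[i] := le_of_lt (hall _ (List.getElem_mem hi'))
      simp only [decide_eq_true_eq, hxle, if_true]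
      have := ih (List.pairwise_cons.1 hL).2 i hi'
      unfold rankIn at this
      simp only [List.length_cons, this]

end RdPeg

namespace RdPeg

open List

lemma nodup_map_of_flatten_nodup {L : List (List ℕ)} (g : List ℕ → ℕ)
    (hmem : ∀ s ∈ L, g s ∈ s) (hnd : L.flatten.Nodup) : (L.map g).Nodup := by
  induction L with
  | nil => simp
  | cons s L ih =>
    rw [List.flatten_cons] at hnd
    rw [List.map_cons, List.nodup_cons]
    constructor
    · intro hmemmap
      rw [List.mem_map] at hmemmap
      obtain ⟨s', hs', he⟩ := hmemmap
      have h1 : g s' ∈ s' := hmem s' (List.mem_cons_of_mem _ hs')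
      have h2 : g s' ∈ L.flatten := (List.sublist_flatten_of_mem hs').mem h1
      have h3 : g s ∈ s := hmem s (List.mem_cons_self)
      exact (List.disjoint_of_nodup_append hnd) (he ▸ h3) h2
    · exact ih (fun t ht => hmem t (List.mem_cons_of_mem _ ht)) hnd.of_append_right

lemma flatMap_perm_of_perm {α : Type*} (L : List α) (g g' : α → List ℕ)
    (hp : ∀ x ∈ L, (g x).Perm (g' x)) : (L.flatMap g).Perm (L.flatMap g') := by
  induction L with
  | nil => simp
  | cons x L ih =>
    rw [List.flatMap_cons, List.flatMap_cons]
    exact (hp x (List.mem_cons_self)).append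
      (ih (fun y hy => hp y (List.mem_cons_of_mem _ hy)))

lemma runs_flatten : ∀ (L : List (ℕ × ℕ)) (a N : ℕ),
    (L.map Prod.fst).Pairwise (· < ·) → (∀ q ∈ L, 1 ≤ q.2) →
    (L.flatMap (fun q => List.range' q.1 q.2)).Perm (List.range' a N) →
    L.flatMap (fun q => List.range' q.1 q.2) = List.range' a N := by
  intro L
  induction L with
  | nil =>
    intro a N _ _ hp
    have : List.range' a N = [] := hp.symm.eq_nil
    rw [this]; rfl
  | cons q L ih =>
    intro a N hsort hpos hp
    have hq2 : 1 ≤ q.2 := hpos q (List.mem_cons_self)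
    have hall : ∀ p ∈ L, q.1 < p.1 := by
      intro p hpmem
      have := (List.pairwise_cons.1 (by rwa [List.map_cons] at hsort)).1
      exact this p.1 (List.mem_map.2 ⟨p, hpmem, rfl⟩)
    -- q.1 = a
    have hmem_q : q.1 ∈ List.range' a N := by
      apply hp.subset
      rw [List.flatMap_cons, List.mem_append]
      left
      rw [List.mem_range']
      exact ⟨0, by omega, by omega⟩
    have hqa : a ≤ q.1 := by
      rw [List.mem_range'] at hmem_q
      obtain ⟨i, _, hi⟩ := hmem_q
      omega
    have hN1 : 1 ≤ N := by
      have := hp.length_eq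
      rw [List.flatMap_cons, List.length_append, List.length_range', List.length_range'] at this
      omega
    have hmem_a : a ∈ (q :: L).flatMap (fun q => List.range' q.1 q.2) := by
      apply hp.symm.subset
      rw [List.mem_range']
      exact ⟨0, by omega, by omega⟩
    have hqa' : q.1 = a := by
      rw [List.flatMap_cons, List.mem_append] at hmem_a
      rcases hmem_a with hh | hh
      · rw [List.mem_range'] at hh
        obtain ⟨i, _, hi⟩ := hh
        omega
      · exfalso
        rw [List.mem_flatMap] at hh
        obtain ⟨p, hpmem, hpa⟩ := hh
        rw [List.mem_range'] at hpa
        obtain ⟨i, _, hi⟩ := hpa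
        have := hall p hpmem
        omega
    have hkN : q.2 ≤ N := by
      have := hp.length_eq
      rw [List.flatMap_cons, List.length_append, List.length_range', List.length_range'] at this
      omega
    have hsplit : List.range' a N = List.range' a q.2 ++ List.range' (a + q.2) (N - q.2) := by
      have := List.range'_append (s := a) (m := q.2) (n := N - q.2) (step := 1)
      rw [show a + 1 * q.2 = a + q.2 by omega, show q.2 + (N - q.2) = N by omega] at this
      exact this.symm
    have hcancel : (L.flatMap (fun q => List.range' q.1 q.2)).Perm
        (List.range' (a + q.2) (N - q.2)) := by
      have hp2 := hp
      rw [List.flatMap_cons, hqa', hsplit] at hp2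
      exact (List.perm_append_left_iff _).1 hp2
    have htail := ih (a + q.2) (N - q.2)
      (by rw [List.map_cons] at hsort; exact (List.pairwise_cons.1 hsort).2)
      (fun p hpmem => hpos p (List.mem_cons_of_mem _ hpmem)) hcancel
    rw [List.flatMap_cons, hqa', htail, hsplit]

/-- The expansion function determined by a list of (start, width) pairs for ranks. -/
def runOf (S : List (ℕ × ℕ)) (p : ℕ × Deco) : List ℕ :=
  if p.2 = Deco.minus then (List.range' (S.getD (p.1 - 1) (0, 0)).1 (S.getD (p.1 - 1) (0, 0)).2).reverse
  else List.range' (S.getD (p.1 - 1) (0, 0)).1 (S.getD (p.1 - 1) (0, 0)).2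

end RdPeg

namespace RdPeg

open List

lemma reach_trans {α : Type*} (step : α → α → Prop) :
    ∀ (k1 k2 : ℕ) (x y z : α), ReachIn step k1 x y → ReachIn step k2 y z →
      ReachIn step (k1 + k2) x z := by
  intro k1
  induction k1 with
  | zero =>
    intro k2 x y z h1 h2
    have : x = y := h1
    subst this
    simpa using h2
  | succ k ih =>
    rintro k2 x y z ⟨w, hw, hr⟩ h2
    rw [Nat.succ_add]
    exact ⟨w, hw, ih _ _ _ _ hr h2⟩

lemma pegSegReverse_append (A t : PegPerm) (i j : ℕ) (hij : i ≤ j) (hj : j < A.length) :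
    pegSegReverse (A ++ t) i j = pegSegReverse A i j ++ t := by
  rw [pegSegReverse_eq, pegSegReverse_eq]
  rw [List.take_append_of_le_length (by omega),
      List.drop_append_of_le_length (by omega),
      List.drop_append_of_le_length (by omega)]
  rw [List.take_append_of_le_length (by rw [List.length_drop]; omega)]
  simp [List.append_assoc]

lemma step_lift (A B t : PegPerm) (h : PegRevStep A B) : PegRevStep (A ++ t) (B ++ t) := by
  obtain ⟨i, j, hij, hj, rfl⟩ := h
  exact ⟨i, j, hij, by rw [List.length_append]; omega,
    (pegSegReverse_append A t i j hij hj).symm⟩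

lemma reach_lift (t : PegPerm) : ∀ (k : ℕ) (A B : PegPerm), ReachIn PegRevStep k A B →
    ReachIn PegRevStep k (A ++ t) (B ++ t) := by
  intro k
  induction k with
  | zero =>
    intro A B hAB
    have : A = B := hAB
    rw [this]
    rfl
  | succ k ih =>
    rintro A B ⟨z, hz, hr⟩
    exact ⟨z ++ t, step_lift _ _ _ hz, ih _ _ hr⟩

lemma reach_peg_length : ∀ (k : ℕ) (x y : PegPerm), ReachIn PegRevStep k x y →
    y.length = x.length := by
  intro k
  induction k with
  | zero =>
    intro x y hxy
    have : x = y := hxy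
    rw [this]
  | succ k ih =>
    rintro x y ⟨z, ⟨i, j, hij, hj, rfl⟩, hr⟩
    rw [ih _ _ hr]
    exact length_pegSegReverse x i j hij hj

lemma pegSegReverse_map_fst_perm (l : PegPerm) (i j : ℕ) (hij : i ≤ j) :
    ((pegSegReverse l i j).map Prod.fst).Perm (l.map Prod.fst) := by
  rw [pegSegReverse_eq]
  conv_rhs => rw [seg_decomp l i j hij]
  simp only [List.map_append, List.map_reverse, List.map_map]
  have he : (Prod.fst ∘ flipP) = (Prod.fst : ℕ × Deco → ℕ) := rfl
  rw [he]
  exact ((List.Perm.refl _).append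
    (List.reverse_perm _)).append (List.Perm.refl _)

lemma range'_one_concat (n : ℕ) : List.range' 1 (n + 1) = List.range' 1 n ++ [n + 1] := by
  rw [List.range'_concat]
  congr 2
  omega

lemma sortable : ∀ (n : ℕ) (l : PegPerm), l.length = n →
    (l.map Prod.fst).Perm (List.range' 1 n) →
    ∃ k m, IsIdPeg m ∧ ReachIn PegRevStep k l m := by
  intro n
  induction n with
  | zero =>
    intro l hlen _
    have : l = [] := List.length_eq_zero_iff.1 hlen
    subst this
    refine ⟨0, [], ⟨rfl, by simp⟩, rfl⟩
  | succ n ih =>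
    intro l hlen hperm
    have hmem : (n + 1) ∈ l.map Prod.fst := by
      apply hperm.symm.subset
      rw [List.mem_range']
      exact ⟨n, by omega, by omega⟩
    rw [List.mem_map] at hmem
    obtain ⟨p, hpmem, hp1⟩ := hmem
    obtain ⟨pos, hpos, hpe⟩ := List.getElem_of_mem hpmem
    have hposn : pos ≤ n := by omega
    have hstep1 : PegRevStep l (pegSegReverse l pos n) := ⟨pos, n, hposn, by omega, rfl⟩
    set A : PegPerm := l.take pos ++ ((l.drop (pos + 1)).map flipP).reverse with hA
    have hfst : (l[pos]).1 = n + 1 := by rw [hpe, hp1]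
    have hl1 : pegSegReverse l pos n = A ++ [(n + 1, flipDeco ((l[pos]).2))] := by
      rw [pegSegReverse_eq]
      have hd : l.drop (n + 1) = [] := by rw [← hlen]; exact List.drop_length
      have ht : (l.drop pos).take (n + 1 - pos) = l.drop pos := by
        apply List.take_of_length_le
        rw [List.length_drop]
        omega
      rw [hd, ht, List.drop_eq_getElem_cons hpos, List.append_nil, List.map_cons,
        List.reverse_cons]
      have hfl : flipP (l[pos]) = (n + 1, flipDeco ((l[pos]).2)) := by
        unfold flipP
        rw [hfst]
      rw [hfl, hA, List.append_assoc]
    have hAlen : A.length = n := by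
      rw [hA]
      simp only [List.length_append, List.length_reverse, List.length_map, List.length_take,
        List.length_drop]
      omega
    have hlp : ((pegSegReverse l pos n).map Prod.fst).Perm (List.range' 1 (n + 1)) :=
      (pegSegReverse_map_fst_perm l pos n hposn).trans (by rw [← hlen] at hperm ⊢; exact hperm)
    have hAperm : (A.map Prod.fst).Perm (List.range' 1 n) := by
      have h3 : (pegSegReverse l pos n).map Prod.fst = A.map Prod.fst ++ [n + 1] := by
        rw [hl1]
        simp
      rw [h3, range'_one_concat] at hlp
      exact (List.perm_append_right_iff _).1 hlp
    have hkey : ∃ k0 d', d' ≠ Deco.minus ∧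
        ReachIn PegRevStep k0 l (A ++ [(n + 1, d')]) := by
      by_cases hd : flipDeco ((l[pos]).2) = Deco.minus
      · refine ⟨2, Deco.plus, by simp, ?_⟩
        refine ⟨pegSegReverse l pos n, hstep1, ?_⟩
        refine ⟨A ++ [(n + 1, Deco.plus)], ?_, rfl⟩
        rw [hl1, hd]
        refine ⟨n, n, le_refl n, ?_, ?_⟩
        · rw [List.length_append, hAlen]
          simp
        · rw [pegSegReverse_eq]
          have e1 : (A ++ [((n : ℕ) + 1, Deco.minus)]).take n = A := List.take_left' hAlen
          have e2 : (A ++ [((n : ℕ) + 1, Deco.minus)]).drop n = [(n + 1, Deco.minus)] :=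
            List.drop_left' hAlen
          have e3 : (A ++ [((n : ℕ) + 1, Deco.minus)]).drop (n + 1) = [] := by
            apply List.drop_eq_nil_of_le
            rw [List.length_append, hAlen]
            simp
          rw [e1, e2, e3, List.append_nil]
          have e4 : n + 1 - n = 1 := by omega
          rw [e4]
          rfl
      · exact ⟨1, flipDeco ((l[pos]).2), hd, ⟨pegSegReverse l pos n, hstep1, hl1⟩⟩
    obtain ⟨k0, d', hd', hreach0⟩ := hkey
    obtain ⟨k1, m1, hm1, hreach1⟩ := ih A hAlen hAperm
    have hreach2 : ReachIn PegRevStep k1 (A ++ [(n + 1, d')]) (m1 ++ [(n + 1, d')]) :=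
      reach_lift _ k1 A m1 hreach1
    have hm1len : m1.length = n := (reach_peg_length k1 A m1 hreach1).trans hAlen
    refine ⟨k0 + k1, m1 ++ [(n + 1, d')], ⟨?_, ?_⟩,
      reach_trans _ k0 k1 _ _ _ hreach0 hreach2⟩
    · have hlenm : (m1 ++ [(n + 1, d')]).length = n + 1 := by
        rw [List.length_append, hm1len]; rfl
      rw [List.map_append, hm1.1, hm1len, hlenm]
      show idPerm n ++ [(n + 1, d')].map Prod.fst = idPerm (n + 1)
      unfold idPerm
      rw [range'_one_concat]
      rfl
    · intro q hq
      rcases List.mem_append.1 hq with hq | hq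
      · exact hm1.2 q hq
      · have : q = (n + 1, d') := by simpa using hq
        rw [this]
        exact hd'

end RdPeg

/-- for every permutation `π`, `rd(π) ≤ rd(peg(π))`. -/
theorem rd_le_pegRd_pegOf (π : List ℕ) (h : IsPermList π) :
    rd π ≤ pegRd (pegOf π) := by
  classical
  set G := stripGroups π with hGdef
  have hflat : G.flatten = π := List.flatten_splitBy _ _
  have hπnd : π.Nodup := by
    have h0 : (idPerm π.length).Nodup := by
      unfold idPerm
      exact List.nodup_range'
    exact h.symm.nodup h0
  have hsne : ∀ s ∈ G, s ≠ [] := by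
    intro s hs he
    exact List.nil_notMem_splitBy _ _ (he ▸ hs)
  have hchain : ∀ s ∈ G, s.Chain' (fun x y => y = x + 1 ∨ x = y + 1) := by
    intro s hs
    have h1 := List.isChain_of_mem_splitBy hs
    refine h1.imp ?_
    intro a b hab
    simpa using hab
  have hsnd : ∀ s ∈ G, s.Nodup := fun s hs =>
    List.Nodup.sublist (List.sublist_flatten_of_mem hs) (by rwa [hflat])
  have hrun : ∀ s ∈ G, s = List.range' (stripMin s) s.length ∨
      s = (List.range' (stripMin s) s.length).reverse :=
    fun s hs => RdPeg.run_min s (hsne s hs) (hchain s hs) (hsnd s hs)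
  set mins := G.map stripMin with hminsdef
  have hminsnd : mins.Nodup :=
    RdPeg.nodup_map_of_flatten_nodup stripMin
      (fun s hs => (RdPeg.stripMin_spec s (hsne s hs)).1) (by rwa [hflat])
  set P := G.map (fun s => (stripMin s, s.length)) with hPdef
  set S := P.mergeSort (fun p q => decide (p.1 ≤ q.1)) with hSdef
  have hSperm : S.Perm P := List.mergeSort_perm P _
  have hPfst : P.map Prod.fst = mins := by
    rw [hPdef, hminsdef, List.map_map]
    rfl
  have hSfst_perm : (S.map Prod.fst).Perm mins := by
    have h1 := hSperm.map Prod.fst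
    rwa [hPfst] at h1
  have hSfst_nd : (S.map Prod.fst).Nodup := hSfst_perm.symm.nodup hminsnd
  have hSsorted_le : (S.map Prod.fst).Pairwise (· ≤ ·) := by
    have h1 := List.pairwise_mergeSort (le := fun p q : ℕ × ℕ => decide (p.1 ≤ q.1))
      (by intro a b c hab hbc; simp at hab hbc ⊢; omega)
      (by intro a b; simp; omega) P
    rw [← hSdef] at h1
    rw [List.pairwise_map]
    refine h1.imp ?_
    intro a b hab
    simpa using hab
  have hSsorted : (S.map Prod.fst).Pairwise (· < ·) :=
    (hSsorted_le.and hSfst_nd).imp fun hh => lt_of_le_of_ne hh.1 hh.2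
  have hrank_eq : ∀ v, rankIn mins v = rankIn (S.map Prod.fst) v :=
    fun v => RdPeg.rankIn_perm _ _ hSfst_perm.symm v
  have hSlen : S.length = G.length := by
    rw [hSdef, List.length_mergeSort, hPdef, List.length_map]
  have hL1 : ∀ s ∈ G, S.getD (rankIn mins (stripMin s) - 1) (0, 0)
      = (stripMin s, s.length) := by
    intro s hs
    have hmmem : stripMin s ∈ mins := by
      rw [hminsdef]
      exact List.mem_map.2 ⟨s, hs, rfl⟩
    have hmem2 : stripMin s ∈ S.map Prod.fst := hSfst_perm.symm.subset hmmem
    obtain ⟨i, hi, hie⟩ := List.getElem_of_mem hmem2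
    have hrank : rankIn mins (stripMin s) = i + 1 := by
      rw [hrank_eq, ← hie]
      exact RdPeg.rankIn_sorted _ hSsorted i hi
    rw [hrank]
    simp only [Nat.add_sub_cancel]
    have hiS : i < S.length := by rwa [List.length_map] at hi
    rw [List.getD_eq_getElem _ _ hiS]
    have hfst2 : (S[i]).1 = stripMin s := by
      rw [← hie, List.getElem_map]
    have hmemS : S[i] ∈ P := hSperm.subset (List.getElem_mem hiS)
    rw [hPdef, List.mem_map] at hmemS
    obtain ⟨s', hs', he⟩ := hmemS
    have hmineq : stripMin s' = stripMin s := by rw [← hfst2, ← he]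
    have hss : s' = s := List.inj_on_of_nodup_map (by rwa [← hminsdef]) hs' hs hmineq
    rw [← he, hss]
  set f := RdPeg.runOf S with hfdef
  have hf_eval : ∀ (r : ℕ) (d : Deco) (a k : ℕ), S.getD (r - 1) (0, 0) = (a, k) →
      f (r, d) = if d = Deco.minus then (List.range' a k).reverse else List.range' a k := by
    intro r d a k hq
    rw [hfdef]
    show (if d = Deco.minus
        then (List.range' (S.getD (r - 1) (0, 0)).1 (S.getD (r - 1) (0, 0)).2).reverse
        else List.range' (S.getD (r - 1) (0, 0)).1 (S.getD (r - 1) (0, 0)).2) = _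
    rw [hq]
  have hpegOf : pegOf π = G.map (fun s => (rankIn mins (stripMin s), stripDeco s)) := by
    unfold pegOf
    rw [← hGdef, ← hminsdef]
  have hhead : ∀ a k, 1 ≤ k → (List.range' a k).headD 0 = a := by
    intro a k hk
    rcases k with _ | k
    · omega
    · rw [List.range'_succ]
      rfl
  have hlast : ∀ a k, 1 ≤ k → (List.range' a k).getLastD 0 = a + (k - 1) := by
    intro a k hk
    rcases k with _ | k
    · omega
    · rw [List.range'_concat, List.getLastD_concat]
      omega
  have hheadrev : ∀ a k, 1 ≤ k → ((List.range' a k).reverse).headD 0 = a + (k - 1) := by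
    intro a k hk
    rcases k with _ | k
    · omega
    · rw [List.range'_concat, List.reverse_append, List.reverse_singleton,
        List.singleton_append]
      simp only [List.headD_cons]
      omega
  have hlastrev : ∀ a k, 1 ≤ k → ((List.range' a k).reverse).getLastD 0 = a := by
    intro a k hk
    rcases k with _ | k
    · omega
    · rw [List.range'_succ, List.reverse_cons, List.getLastD_concat]
  have hF : ∀ s ∈ G, f (rankIn mins (stripMin s), stripDeco s) = s := by
    intro s hs
    have hq := hL1 s hs
    have h1 : 1 ≤ s.length := List.length_pos_iff.2 (hsne s hs)
    rw [hf_eval _ _ _ _ hq]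
    by_cases hk : s.length ≤ 1
    · have hdot : stripDeco s = Deco.dot := by
        unfold stripDeco
        rw [if_pos hk]
      rw [hdot, if_neg (by simp)]
      have hk1 : s.length = 1 := by omega
      rcases hrun s hs with hsr | hsr
      · exact hsr.symm
      · rw [hk1] at hsr ⊢
        conv_rhs => rw [hsr]
        rfl
    · push_neg at hk
      rcases hrun s hs with hsr | hsr
      · have hh : s.headD 0 = stripMin s := by
          conv_lhs => rw [hsr]
          exact hhead _ _ h1
        have hl : s.getLastD 0 = stripMin s + (s.length - 1) := by
          conv_lhs => rw [hsr]
          exact hlast _ _ h1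
        have hplus : stripDeco s = Deco.plus := by
          unfold stripDeco
          rw [if_neg (by omega), hh, hl, if_pos (by omega)]
        rw [hplus, if_neg (by simp)]
        exact hsr.symm
      · have hh : s.headD 0 = stripMin s + (s.length - 1) := by
          conv_lhs => rw [hsr]
          exact hheadrev _ _ h1
        have hl : s.getLastD 0 = stripMin s := by
          conv_lhs => rw [hsr]
          exact hlastrev _ _ h1
        have hminus : stripDeco s = Deco.minus := by
          unfold stripDeco
          rw [if_neg (by omega), hh, hl, if_neg (by omega)]
        rw [hminus, if_pos rfl]
        exact hsr.symm
  have hinit : (pegOf π).flatMap f = π := by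
    rw [hpegOf, List.flatMap_map]
    rw [List.flatMap_congr hF]
    rw [List.flatMap_def, List.map_id', hflat]
  have hdeco_ne_dot : ∀ (s : List ℕ), ¬ s.length ≤ 1 → stripDeco s ≠ Deco.dot := by
    intro s hlen
    unfold stripDeco
    rw [if_neg hlen]
    split_ifs <;> simp
  have hgood : RdPeg.GoodF f (pegOf π) := by
    intro p hp
    rw [hpegOf, List.mem_map] at hp
    obtain ⟨s, hs, rfl⟩ := hp
    have hq := hL1 s hs
    have h1 : 1 ≤ s.length := List.length_pos_iff.2 (hsne s hs)
    show f (rankIn mins (stripMin s), flipDeco (stripDeco s))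
        = (f (rankIn mins (stripMin s), stripDeco s)).reverse
    rw [hf_eval _ _ _ _ hq, hf_eval _ _ _ _ hq]
    cases hdec : stripDeco s with
    | plus => simp [flipDeco]
    | minus => simp [flipDeco]
    | dot =>
      simp only [flipDeco]
      have hk1 : s.length = 1 := by
        by_contra hne
        exact hdeco_ne_dot s (by omega) hdec
      rw [hk1]
      rfl
  have hGlen : (pegOf π).length = G.length := by rw [hpegOf, List.length_map]
  have hvals : ((pegOf π).map Prod.fst).Perm (List.range' 1 G.length) := by
    have h1 : (pegOf π).map Prod.fst = mins.map (rankIn mins) := by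
      rw [hpegOf, List.map_map, hminsdef, List.map_map]
      rfl
    have h2 : (mins.map (rankIn mins)).Perm ((S.map Prod.fst).map (rankIn mins)) :=
      (hSfst_perm.symm).map _
    have h3 : (S.map Prod.fst).map (rankIn mins)
        = (S.map Prod.fst).map (rankIn (S.map Prod.fst)) :=
      List.map_congr_left (fun v _ => hrank_eq v)
    have h4 : (S.map Prod.fst).map (rankIn (S.map Prod.fst)) = List.range' 1 G.length := by
      apply List.ext_getElem
      · rw [List.length_map, List.length_map, hSlen, List.length_range']
      · intro i hi1 hi2
        rw [List.getElem_map, List.getElem_range']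
        have hi' : i < (S.map Prod.fst).length := by
          rw [List.length_map] at hi1 ⊢
          rwa [List.length_map] at hi1
        rw [RdPeg.rankIn_sorted _ hSsorted i hi']
        omega
    rw [h1]
    rw [h3, h4] at h2
    exact h2
  obtain ⟨k₀, m₀, hm₀, hr₀⟩ := RdPeg.sortable G.length (pegOf π) hGlen hvals
  have hne : Set.Nonempty {k | ∃ m, IsIdPeg m ∧ ReachIn PegRevStep k (pegOf π) m} :=
    ⟨k₀, m₀, hm₀, hr₀⟩
  obtain ⟨m, hm, hr⟩ := Nat.sInf_mem hne
  have hr' : ReachIn PegRevStep (pegRd (pegOf π)) (pegOf π) m := hr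
  obtain ⟨hgm, hlm, k', hk', hreach⟩ :=
    RdPeg.reach_sim f (pegRd (pegOf π)) (pegOf π) m hgood hr'
  have hmlen : m.length = S.length := by rw [hlm, hGlen, hSlen]
  have hmfst : m.map Prod.fst = List.range' 1 m.length := hm.1
  have hstep1 : m.map f = S.map (fun q => List.range' q.1 q.2) := by
    apply List.ext_getElem
    · rw [List.length_map, List.length_map, hmlen]
    · intro i hi1 hi2
      have him : i < m.length := by rwa [List.length_map] at hi1
      have hiS : i < S.length := by rwa [hmlen] at him
      rw [List.getElem_map, List.getElem_map]
      have hval : (m[i]).1 = 1 + i := by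
        have h5 : (m.map Prod.fst).getD i 0 = (List.range' 1 m.length).getD i 0 := by
          rw [hmfst]
        rw [List.getD_eq_getElem _ _ (by rwa [List.length_map]),
          List.getD_eq_getElem _ _ (by rwa [List.length_range'])] at h5
        rw [List.getElem_map, List.getElem_range'] at h5
        omega
      have hdm : (m[i]).2 ≠ Deco.minus := hm.2 _ (List.getElem_mem him)
      have hqi : S.getD ((m[i]).1 - 1) (0, 0) = ((S[i]).1, (S[i]).2) := by
        rw [hval, show 1 + i - 1 = i from by omega, List.getD_eq_getElem _ _ hiS]
      have h6 := hf_eval (m[i]).1 (m[i]).2 (S[i]).1 (S[i]).2 hqi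
      rw [show m[i] = ((m[i]).1, (m[i]).2) from rfl, h6, if_neg hdm]
  have hSpos : ∀ q ∈ S, 1 ≤ q.2 := by
    intro q hqS
    have hqP : q ∈ P := hSperm.subset hqS
    rw [hPdef, List.mem_map] at hqP
    obtain ⟨s, hs, he⟩ := hqP
    rw [← he]
    exact List.length_pos_iff.2 (hsne s hs)
  have hsum : S.flatMap (fun q => List.range' q.1 q.2) = List.range' 1 π.length := by
    apply RdPeg.runs_flatten S 1 π.length hSsorted hSpos
    have p1 : (S.flatMap (fun q => List.range' q.1 q.2)).Perm
        (P.flatMap (fun q => List.range' q.1 q.2)) := by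
      rw [List.flatMap_def, List.flatMap_def]
      exact (hSperm.map _).flatten
    have p2 : P.flatMap (fun q => List.range' q.1 q.2)
        = G.flatMap (fun s => List.range' (stripMin s) s.length) := by
      rw [hPdef, List.flatMap_map]
    have p3 : (G.flatMap (fun s => List.range' (stripMin s) s.length)).Perm
        (G.flatMap (fun s => s)) := by
      apply RdPeg.flatMap_perm_of_perm
      intro s hs
      rcases hrun s hs with hsr | hsr
      · conv_rhs => rw [hsr]
      · conv_rhs => rw [hsr]
        exact (List.reverse_perm _).symm
    have p4 : G.flatMap (fun s => s) = π := by
      rw [List.flatMap_def, List.map_id', hflat]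
    have p5 : π.Perm (List.range' 1 π.length) := h
    have p6 : (G.flatMap (fun s => s)).Perm (List.range' 1 π.length) := by
      rw [p4]
      exact p5
    exact (p1.trans (by rw [p2]; exact p3)).trans p6
  have hfin : m.flatMap f = List.range' 1 π.length := by
    rw [List.flatMap_def, hstep1, ← List.flatMap_def, hsum]
  have hfinal : ReachIn RevStep k' π (idPerm π.length) := by
    have h7 := hreach
    rw [hinit, hfin] at h7
    exact h7
  have h8 : rd π ≤ k' := Nat.sInf_le hfinal
  exact le_trans h8 hk'
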